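/- An integral domain D (not a field) is a RAV-domain if and only if D is an AV-domain and its integral closure D̄ in its quotient field K is a rational valuation domain, i.e., there exists a valuation on K with values in the linearly ordered abelian group (ℚ, +) (written multiplicatively with a zero adjoined) whose valuation ring is exactly D̄. -/

import Mathlib

/-- `D` is an almost valuation (AV-) domain: for all nonzero `a b : D` there is a positive
integer `n` with `a ^ n ∣ b ^ n` or `b ^ n ∣ a ^ n`. -/
def IsAVDomain (D : Type*) [CommRing D] : Prop :=
  ∀ a b : D, a ≠ 0 → b ≠ 0 → ∃ n : ℕ, 0 < n ∧ (a ^ n ∣ b ^ n ∨ b ^ n ∣ a ^ n)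

section RAVaux
variable {D K : Type*} [CommRing D] [IsDomain D] [Field K] [Algebra D K] [IsFractionRing D K]

open Polynomial

/-- If `e ∈ K` is integral over `D` and is the inverse of (the image of) `f : D`,
then `e` is in the image of `D` and `f` is a unit. -/
lemma rav_inv_mem {e : K} {f : D} (he : e ∈ integralClosure D K)
    (hef : e * algebraMap D K f = 1) :
    (∃ g : D, algebraMap D K g = e ∧ g * f = 1) := by
  have hinj : Function.Injective (algebraMap D K) := IsFractionRing.injective D K
  obtain ⟨p, hp, hpe⟩ := he
  set k := p.natDegree with hk
  have hk0 : k ≠ 0 := by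
    intro h
    have h1 : p = 1 := hp.natDegree_eq_zero.mp (hk ▸ h)
    rw [h1] at hpe; simp at hpe
  have hpow : ∀ i : ℕ, e ^ i * algebraMap D K (f ^ i) = 1 := by
    intro i; rw [map_pow, ← mul_pow, hef, one_pow]
  have h1 : e ^ k = -∑ i ∈ Finset.range k, algebraMap D K (p.coeff i) * e ^ i := by
    have h2 := Polynomial.aeval_eq_sum_range (R := D) (p := p) e
    have hpe' : (Polynomial.aeval e) p = 0 := hpe
    rw [hpe', Finset.sum_range_succ, hp.coeff_natDegree] at h2
    simp only [Algebra.smul_def, map_one, one_mul] at h2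
    rw [eq_neg_iff_add_eq_zero]
    rw [← hk] at h2
    linear_combination -h2
  set g : D := -∑ i ∈ Finset.range k, p.coeff i * f ^ (k - 1 - i) with hgdef
  have hg : algebraMap D K g = e := by
    rw [hgdef]
    have he1 : e = e ^ k * algebraMap D K (f ^ (k-1)) := by
      calc e = e * (e ^ (k-1) * algebraMap D K (f ^ (k-1))) := by rw [hpow]; ring
      _ = e ^ k * algebraMap D K (f ^ (k-1)) := by
          rw [show e * (e ^ (k-1) * algebraMap D K (f^(k-1)))
              = e ^ (1 + (k-1)) * algebraMap D K (f^(k-1)) by ring]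
          congr 2
          omega
    rw [he1, h1, map_neg, map_sum, neg_mul, Finset.sum_mul]
    congr 1
    refine Finset.sum_congr rfl fun i hi => ?_
    have hik : i ≤ k - 1 := by
      have := Finset.mem_range.mp hi; omega
    rw [map_mul, map_pow, map_pow]
    have : (algebraMap D K f) ^ (k-1) = (algebraMap D K f) ^ i * (algebraMap D K f) ^ (k-1-i) := by
      rw [← pow_add]; congr 1; omega
    rw [this]
    have h3 : e ^ i * (algebraMap D K f) ^ i = 1 := by
      rw [← map_pow]; exact hpow i
    linear_combination (-(algebraMap D K (p.coeff i)) * (algebraMap D K f)^(k-1-i)) * h3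
  refine ⟨g, hg, hinj ?_⟩
  rw [map_mul, hg, map_one, hef]


/-- In an AV-domain, every integral element has a power in the image of `D`. -/
lemma rav_root (hAV : ∀ a b : D, a ≠ 0 → b ≠ 0 → ∃ n : ℕ, 0 < n ∧ (a ^ n ∣ b ^ n ∨ b ^ n ∣ a ^ n))
    {x : K} (hx : x ∈ integralClosure D K) :
    ∃ k : ℕ, 0 < k ∧ ∃ d : D, x ^ k = algebraMap D K d := by
  have hinj : Function.Injective (algebraMap D K) := IsFractionRing.injective D K
  by_cases hx0 : x = 0
  · exact ⟨1, one_pos, 0, by simp [hx0]⟩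
  obtain ⟨b, c, hc, rfl⟩ := IsFractionRing.div_surjective (A := D) x
  have hc0 : c ≠ 0 := nonZeroDivisors.ne_zero hc
  have hc0' : algebraMap D K c ≠ 0 := fun h => hc0 (hinj (by rw [h, map_zero]))
  have hb0' : algebraMap D K b ≠ 0 := by
    intro h; rw [h] at hx0; simp at hx0
  have hb0 : b ≠ 0 := fun h => hb0' (by rw [h, map_zero])
  obtain ⟨n, hn, h | h⟩ := hAV b c hb0 hc0
  · -- b ^ n ∣ c ^ n : the quotient is inverse of an element of D
    obtain ⟨d, hd⟩ := h
    have hef : (algebraMap D K b / algebraMap D K c) ^ n * algebraMap D K d = 1 := by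
      rw [div_pow, div_mul_eq_mul_div, ← map_pow, ← map_mul, ← hd, map_pow]
      exact div_self (pow_ne_zero n hc0')
    have hmem : (algebraMap D K b / algebraMap D K c) ^ n ∈ integralClosure D K :=
      pow_mem hx n
    obtain ⟨g, hg, -⟩ := rav_inv_mem hmem hef
    exact ⟨n, hn, g, hg.symm⟩
  · obtain ⟨d, hd⟩ := h
    refine ⟨n, hn, d, ?_⟩
    rw [div_pow, div_eq_iff (pow_ne_zero n hc0'), ← map_pow, ← map_pow, ← map_mul, hd,
      map_mul, mul_comm, map_mul]

/-- For a valuation whose ring is the integral closure, nonzero nonunits of `D`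
have value strictly between `0` and `1`. -/
lemma rav_lt_one (v : Valuation K (WithZero (Multiplicative ℚ)))
    (hv : ∀ x : K, v x ≤ 1 ↔ x ∈ integralClosure D K)
    {f : D} (hf0 : f ≠ 0) (hfu : ¬IsUnit f) :
    v (algebraMap D K f) < 1 ∧ v (algebraMap D K f) ≠ 0 := by
  have hinj : Function.Injective (algebraMap D K) := IsFractionRing.injective D K
  have hf0' : algebraMap D K f ≠ 0 := fun h => hf0 (hinj (by rw [h, map_zero]))
  have hle : v (algebraMap D K f) ≤ 1 := (hv _).mpr (by
    rw [mem_integralClosure_iff]; exact isIntegral_algebraMap)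
  have hne : v (algebraMap D K f) ≠ 0 := v.ne_zero_iff.mpr hf0'
  refine ⟨lt_of_le_of_ne hle ?_, hne⟩
  intro heq
  have hinv : v (algebraMap D K f)⁻¹ ≤ 1 := by
    rw [map_inv₀, heq]; simp
  have hmem := (hv _).mp hinv
  obtain ⟨g, -, hgf⟩ := rav_inv_mem hmem (inv_mul_cancel₀ hf0')
  exact hfu (IsUnit.of_mul_eq_one (a := f) g (by rw [mul_comm]; exact hgf))


lemma rav_forward (hDf : ¬IsField D) (a : D)
    (ha : ∀ y : D, y ≠ 0 → ¬IsUnit y →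
      ∃ m n : ℕ, 0 < m ∧ 0 < n ∧ ∃ u : Dˣ, y ^ m = (u : D) * a ^ n) :
    ∃ v : Valuation K (WithZero (Multiplicative ℚ)),
      ∀ x : K, v x ≤ 1 ↔ x ∈ integralClosure D K := by
  have hinj : Function.Injective (algebraMap D K) := IsFractionRing.injective D K
  obtain ⟨y₀, hy₀0, hy₀u⟩ := Ring.exists_not_isUnit_of_not_isField hDf
  obtain ⟨m₀, n₀, hm₀, hn₀, u₀, hu₀⟩ := ha y₀ hy₀0 hy₀u
  have ha0 : a ≠ 0 := by
    rintro rfl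
    rw [zero_pow hn₀.ne', mul_zero] at hu₀
    exact hy₀0 (pow_eq_zero_iff hm₀.ne' |>.mp hu₀)
  have hau : ¬IsUnit a := by
    intro h
    apply hy₀u
    have : IsUnit (y₀ ^ m₀) := by rw [hu₀]; exact (u₀.isUnit).mul (h.pow n₀)
    exact (isUnit_pow_iff hm₀.ne').mp this
  -- exponents on `a` are determined up to units
  have hexp : ∀ i j : ℕ, ∀ u : Dˣ, a ^ i = (u : D) * a ^ j → i = j := by
    intro i j u h
    by_contra hne
    apply hau
    rcases le_total i j with hij | hij
    · have h2 : (1 : D) * a ^ i = ((u : D) * a ^ (j - i)) * a ^ i := by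
        rw [one_mul, mul_assoc, ← pow_add, show j - i + i = j by omega]
        exact h
      have h3 : (1 : D) = (u : D) * a ^ (j - i) := mul_right_cancel₀ (pow_ne_zero i ha0) h2
      have h4 : IsUnit (a ^ (j - i)) :=
        IsUnit.of_mul_eq_one (a := a ^ (j - i)) ((u : D)) (by rw [mul_comm]; exact h3.symm)
      exact (isUnit_pow_iff (by omega : j - i ≠ 0)).mp h4
    · have h2 : a ^ (i - j) * a ^ j = (u : D) * a ^ j := by
        rw [← pow_add, ← h]; congr 1; omega
      have h3 := mul_right_cancel₀ (pow_ne_zero j ha0) h2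
      exact (isUnit_pow_iff (by omega : i - j ≠ 0)).mp (h3 ▸ u.isUnit)
  -- the "value" relation on D
  set Wrel : D → ℚ → Prop :=
    fun y r => ∃ m n : ℕ, 0 < m ∧ (∃ u : Dˣ, y ^ m = (u : D) * a ^ n) ∧
      r = (n : ℚ) / (m : ℚ) with hWrel
  have hWex : ∀ y : D, ∃ r : ℚ, y ≠ 0 → Wrel y r := by
    intro y
    by_cases hyu : IsUnit y
    · obtain ⟨uy, huy⟩ := hyu
      exact ⟨0, fun _ => ⟨1, 0, one_pos, ⟨uy, by simp [huy]⟩, by simp⟩⟩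
    by_cases hy0 : y = 0
    · exact ⟨0, fun h => absurd hy0 h⟩
    obtain ⟨m, n, hm, hn, u, hu⟩ := ha y hy0 hyu
    exact ⟨(n : ℚ) / m, fun _ => ⟨m, n, hm, ⟨u, hu⟩, rfl⟩⟩
  choose w hw using hWex
  have hWuniq : ∀ y : D, ∀ r s : ℚ, Wrel y r → Wrel y s → r = s := by
    rintro y r s ⟨m, n, hm, ⟨u, hu⟩, rfl⟩ ⟨m', n', hm', ⟨u', hu'⟩, rfl⟩
    have h4 : ((u : D)) ^ m' * a ^ (n * m') = ((u' : D)) ^ m * a ^ (n' * m) := by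
      rw [pow_mul, pow_mul, ← mul_pow, ← mul_pow, ← hu, ← hu', ← pow_mul, ← pow_mul,
        mul_comm m m']
    have h5 : a ^ (n * m') = (((u ^ m')⁻¹ * u' ^ m : Dˣ) : D) * a ^ (n' * m) := by
      apply mul_left_cancel₀ (Units.ne_zero (u ^ m'))
      rw [← mul_assoc, ← Units.val_mul, mul_inv_cancel_left, Units.val_pow_eq_pow_val,
        Units.val_pow_eq_pow_val]
      exact h4
    have h6 : n * m' = n' * m := hexp _ _ _ h5
    rw [div_eq_div_iff (by positivity) (by positivity)]
    exact_mod_cast h6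
  have hw0 : ∀ y : D, y ≠ 0 → 0 ≤ w y := by
    intro y hy
    obtain ⟨m, n, hm, -, hr⟩ := hw y hy
    rw [hr]; positivity
  have hwmul : ∀ y z : D, y ≠ 0 → z ≠ 0 → w (y * z) = w y + w z := by
    intro y z hy hz
    obtain ⟨m, n, hm, ⟨u, hu⟩, hr⟩ := hw y hy
    obtain ⟨m', n', hm', ⟨u', hu'⟩, hr'⟩ := hw z hz
    have hWyz : Wrel (y * z) ((n : ℚ) / m + (n' : ℚ) / m') := by
      refine ⟨m * m', n * m' + n' * m, by positivity, ⟨u ^ m' * u' ^ m, ?_⟩, ?_⟩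
      · rw [mul_pow, pow_mul, pow_mul', hu, hu', mul_pow, mul_pow, ← pow_mul, ← pow_mul,
          pow_add, Units.val_mul, Units.val_pow_eq_pow_val, Units.val_pow_eq_pow_val]
        ring
      · have hmq : (m : ℚ) ≠ 0 := by positivity
        have hmq' : (m' : ℚ) ≠ 0 := by positivity
        field_simp
        push_cast; ring
    have := hWuniq (y * z) _ _ (hw (y * z) (mul_ne_zero hy hz)) hWyz
    rw [this, hr, hr']
  have hwone : w (1 : D) = 0 := by
    refine hWuniq 1 _ _ (hw 1 one_ne_zero) ⟨1, 0, one_pos, ⟨1, by simp⟩, by simp⟩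
  -- common power representation
  have hcp : ∀ y z : D, y ≠ 0 → z ≠ 0 → ∃ N P Q : ℕ, 0 < N ∧
      (∃ u : Dˣ, y ^ N = (u : D) * a ^ P) ∧ (∃ u : Dˣ, z ^ N = (u : D) * a ^ Q) ∧
      w y = (P : ℚ) / N ∧ w z = (Q : ℚ) / N := by
    intro y z hy hz
    obtain ⟨m, n, hm, ⟨u, hu⟩, hr⟩ := hw y hy
    obtain ⟨m', n', hm', ⟨u', hu'⟩, hr'⟩ := hw z hz
    have hmq : (m : ℚ) ≠ 0 := by positivity
    have hmq' : (m' : ℚ) ≠ 0 := by positivity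
    refine ⟨m * m', n * m', n' * m, by positivity, ⟨u ^ m', ?_⟩, ⟨u' ^ m, ?_⟩, ?_, ?_⟩
    · rw [pow_mul, hu, mul_pow, ← pow_mul, Units.val_pow_eq_pow_val]
    · rw [mul_comm m m', pow_mul, hu', mul_pow, ← pow_mul, Units.val_pow_eq_pow_val,
        mul_comm n' m]
    · rw [hr]; field_simp; push_cast; ring
    · rw [hr']; field_simp; push_cast; ring
  -- extend to K
  have hVex : ∀ x : K, ∃ r : ℚ, x ≠ 0 → ∃ b c : D, b ≠ 0 ∧ c ≠ 0 ∧
      x * algebraMap D K c = algebraMap D K b ∧ r = w b - w c := by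
    intro x
    by_cases hx0 : x = 0
    · exact ⟨0, fun h => absurd hx0 h⟩
    obtain ⟨b, c, hc, rfl⟩ := IsFractionRing.div_surjective (A := D) x
    have hc0 : c ≠ 0 := nonZeroDivisors.ne_zero hc
    have hc0' : algebraMap D K c ≠ 0 := fun h => hc0 (hinj (by rw [h, map_zero]))
    have hb0' : algebraMap D K b ≠ 0 := fun h => hx0 (by rw [h, zero_div])
    have hb0 : b ≠ 0 := fun h => hb0' (by rw [h, map_zero])
    exact ⟨w b - w c, fun _ => ⟨b, c, hb0, hc0, div_mul_cancel₀ _ hc0', rfl⟩⟩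
  choose wk hwk using hVex
  have hwkdef : ∀ x : K, x ≠ 0 → ∀ b c : D, b ≠ 0 → c ≠ 0 →
      x * algebraMap D K c = algebraMap D K b → wk x = w b - w c := by
    intro x hx b c hb hc h
    obtain ⟨b', c', hb', hc', h', hr'⟩ := hwk x hx
    have hcross : b * c' = b' * c := by
      apply hinj
      rw [map_mul, map_mul, ← h, ← h']
      ring
    have := congrArg w hcross
    rw [hwmul b c' hb hc', hwmul b' c hb' hc] at this
    rw [hr']
    linarith
  have hwkmul : ∀ x y : K, x ≠ 0 → y ≠ 0 → wk (x * y) = wk x + wk y := by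
    intro x y hx hy
    obtain ⟨b, c, hb, hc, h, hr⟩ := hwk x hx
    obtain ⟨b', c', hb', hc', h', hr'⟩ := hwk y hy
    have h2 : (x * y) * algebraMap D K (c * c') = algebraMap D K (b * b') := by
      rw [map_mul, map_mul, ← h, ← h']; ring
    rw [hwkdef (x * y) (mul_ne_zero hx hy) (b * b') (c * c') (mul_ne_zero hb hb')
      (mul_ne_zero hc hc') h2, hwmul b b' hb hb', hwmul c c' hc hc', hr, hr']
    ring
  have hwkone : wk (1 : K) = 0 := by
    rw [hwkdef 1 one_ne_zero 1 1 one_ne_zero one_ne_zero (by rw [map_one, mul_one])]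
    ring
  have hint_of : ∀ x : K, x ≠ 0 → 0 ≤ wk x → x ∈ integralClosure D K := by
    intro x hx hwx
    obtain ⟨b, c, hb, hc, h, hr⟩ := hwk x hx
    obtain ⟨N, P, Q, hN, ⟨u, hu⟩, ⟨u', hu'⟩, hwb, hwc⟩ := hcp b c hb hc
    have hQP : Q ≤ P := by
      rw [hr, hwb, hwc] at hwx
      have : (Q : ℚ) / N ≤ (P : ℚ) / N := by linarith
      have := (div_le_div_iff_of_pos_right (by positivity : (0:ℚ) < N)).mp this
      exact_mod_cast this
    have hxN : x ^ N * algebraMap D K (c ^ N) = algebraMap D K (b ^ N) := by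
      rw [map_pow, map_pow, ← mul_pow, h]
    set d : D := (u : D) * ((u'⁻¹ : Dˣ) : D) * a ^ (P - Q) with hd
    have hcne : algebraMap D K ((u' : D) * a ^ Q) ≠ 0 := fun hh =>
      (mul_ne_zero u'.ne_zero (pow_ne_zero Q ha0)) (hinj (by rw [hh, map_zero]))
    have hxd : x ^ N = algebraMap D K d := by
      apply mul_right_cancel₀ hcne
      rw [← hu', hxN, hu, ← map_mul]
      congr 1
      rw [hd, hu']
      have huu : ((u'⁻¹ : Dˣ) : D) * (u' : D) = 1 := by
        rw [← Units.val_mul, inv_mul_cancel, Units.val_one]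
      have hpow : a ^ (P - Q) * a ^ Q = a ^ P := pow_sub_mul_pow a hQP
      linear_combination (-((u : D) * (a ^ (P - Q) * a ^ Q))) * huu + (-(u : D)) * hpow
    rw [mem_integralClosure_iff]
    refine ⟨Polynomial.X ^ N - Polynomial.C d, Polynomial.monic_X_pow_sub_C d hN.ne', ?_⟩
    simp [hxd]
  have hint_to : ∀ x : K, x ≠ 0 → x ∈ integralClosure D K → 0 ≤ wk x := by
    intro x hx hmem
    by_contra hneg
    push_neg at hneg
    obtain ⟨b, c, hb, hc, h, hr⟩ := hwk x hx
    obtain ⟨N, P, Q, hN, ⟨u, hu⟩, ⟨u', hu'⟩, hwb, hwc⟩ := hcp b c hb hc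
    have hPQ : P < Q := by
      rw [hr, hwb, hwc] at hneg
      have : (P : ℚ) / N < (Q : ℚ) / N := by linarith
      have := (div_lt_div_iff_of_pos_right (by positivity : (0:ℚ) < N)).mp this
      exact_mod_cast this
    have hxN : x ^ N * algebraMap D K (c ^ N) = algebraMap D K (b ^ N) := by
      rw [map_pow, map_pow, ← mul_pow, h]
    set f : D := (u' : D) * ((u⁻¹ : Dˣ) : D) * a ^ (Q - P) with hf
    have hbne : algebraMap D K ((u : D) * a ^ P) ≠ 0 := fun hh =>
      (mul_ne_zero u.ne_zero (pow_ne_zero P ha0)) (hinj (by rw [hh, map_zero]))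
    have hef : x ^ N * algebraMap D K f = 1 := by
      apply mul_right_cancel₀ hbne
      have huu : ((u⁻¹ : Dˣ) : D) * (u : D) = 1 := by
        rw [← Units.val_mul, inv_mul_cancel, Units.val_one]
      have hfa : f * ((u : D) * a ^ P) = c ^ N := by
        rw [hf, hu']
        have hpow : a ^ (Q - P) * a ^ P = a ^ Q := pow_sub_mul_pow a hPQ.le
        linear_combination ((u' : D) * (a ^ (Q - P) * a ^ P)) * huu + ((u' : D)) * hpow
      rw [one_mul, mul_assoc, ← map_mul, hfa, hxN, hu]
    have hfu : ¬IsUnit f := by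
      intro hfu
      apply hau
      have h1 : IsUnit ((u' : D) * ((u⁻¹ : Dˣ) : D)) := u'.isUnit.mul (u⁻¹).isUnit
      have h2 : IsUnit (a ^ (Q - P)) := by
        obtain ⟨g, hg⟩ := h1
        have := hfu
        rw [hf, ← hg] at this
        exact (Units.isUnit_units_mul g _).mp this
      exact (isUnit_pow_iff (by omega : Q - P ≠ 0)).mp h2
    obtain ⟨g, -, hgf⟩ := rav_inv_mem (pow_mem hmem N) hef
    exact hfu (IsUnit.of_mul_eq_one (a := f) g (by rw [mul_comm]; exact hgf))
  have hcase : ∀ x y : K, x ≠ 0 → y ≠ 0 → x + y ≠ 0 → wk x ≤ wk y → wk x ≤ wk (x + y) := by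
    intro x y hx hy hxy hle
    have hxi : x⁻¹ ≠ 0 := inv_ne_zero hx
    have hxinv : wk x⁻¹ = -wk x := by
      have := hwkmul x x⁻¹ hx hxi
      rw [mul_inv_cancel₀ hx, hwkone] at this
      linarith
    have hyx : y * x⁻¹ ≠ 0 := mul_ne_zero hy hxi
    have h1 : 0 ≤ wk (y * x⁻¹) := by
      rw [hwkmul y x⁻¹ hy hxi, hxinv]; linarith
    have h2 : y * x⁻¹ ∈ integralClosure D K := hint_of _ hyx h1
    have h3 : (1 : K) + y * x⁻¹ ∈ integralClosure D K := add_mem (one_mem _) h2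
    have h4 : (1 : K) + y * x⁻¹ = (x + y) * x⁻¹ := by field_simp
    have h5 : (x + y) * x⁻¹ ≠ 0 := mul_ne_zero hxy hxi
    have h6 : 0 ≤ wk ((x + y) * x⁻¹) := hint_to _ h5 (h4 ▸ h3)
    rw [hwkmul _ _ hxy hxi, hxinv] at h6
    linarith
  -- build the valuation
  classical
  set vf : K → WithZero (Multiplicative ℚ) := fun x =>
    if x = 0 then 0 else ((Multiplicative.ofAdd (-(wk x)) : Multiplicative ℚ) :
      WithZero (Multiplicative ℚ)) with hvfdef
  have hvf0 : vf 0 = 0 := if_pos rfl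
  have hvfne : ∀ x : K, x ≠ 0 →
      vf x = ((Multiplicative.ofAdd (-(wk x)) : Multiplicative ℚ) :
        WithZero (Multiplicative ℚ)) := fun x hx => if_neg hx
  have hone : vf 1 = 1 := by
    rw [hvfne 1 one_ne_zero, hwkone]
    simp
  have hmul : ∀ x y : K, vf (x * y) = vf x * vf y := by
    intro x y
    by_cases hx : x = 0
    · rw [hx, zero_mul, hvf0, zero_mul]
    by_cases hy : y = 0
    · rw [hy, mul_zero, hvf0, mul_zero]
    rw [hvfne _ (mul_ne_zero hx hy), hvfne x hx, hvfne y hy, ← WithZero.coe_mul,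
      hwkmul x y hx hy]
    congr 1
    rw [neg_add, ofAdd_add]
  have haddle : ∀ x y : K, vf (x + y) ≤ max (vf x) (vf y) := by
    intro x y
    by_cases hx : x = 0
    · rw [hx, zero_add]; exact le_max_right _ _
    by_cases hy : y = 0
    · rw [hy, add_zero]; exact le_max_left _ _
    by_cases hxy : x + y = 0
    · rw [hxy, hvf0]; exact zero_le'
    rw [hvfne _ hxy, hvfne x hx, hvfne y hy]
    rcases le_total (wk x) (wk y) with h | h
    · have hm := hcase x y hx hy hxy h
      refine le_max_of_le_left ?_
      exact WithZero.coe_le_coe.mpr (Multiplicative.ofAdd_le.mpr (by linarith))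
    · have hm := hcase y x hy hx (by rwa [add_comm]) h
      rw [add_comm] at hm
      refine le_max_of_le_right ?_
      exact WithZero.coe_le_coe.mpr (Multiplicative.ofAdd_le.mpr (by linarith))
  refine ⟨⟨⟨⟨vf, hvf0⟩, hone, hmul⟩, haddle⟩, ?_⟩
  intro x
  by_cases hx : x = 0
  · subst hx
    constructor
    · intro _; exact zero_mem _
    · intro _; show vf 0 ≤ 1; rw [hvf0]; exact zero_le'
  · show vf x ≤ 1 ↔ _
    rw [hvfne x hx, ← WithZero.coe_one, WithZero.coe_le_coe, ← ofAdd_zero]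
    constructor
    · intro hle
      exact hint_of x hx (by linarith [Multiplicative.ofAdd_le.mp hle])
    · intro hmem
      exact Multiplicative.ofAdd_le.mpr (by linarith [hint_to x hx hmem])


lemma rav_backward (hDf : ¬IsField D)
    (hAV : ∀ a b : D, a ≠ 0 → b ≠ 0 → ∃ n : ℕ, 0 < n ∧ (a ^ n ∣ b ^ n ∨ b ^ n ∣ a ^ n))
    (v : Valuation K (WithZero (Multiplicative ℚ)))
    (hv : ∀ x : K, v x ≤ 1 ↔ x ∈ integralClosure D K) :
    ∃ a : D, ∀ y : D, y ≠ 0 → ¬IsUnit y →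
      ∃ m n : ℕ, 0 < m ∧ 0 < n ∧ ∃ u : Dˣ, y ^ m = (u : D) * a ^ n := by
  have hinj : Function.Injective (algebraMap D K) := IsFractionRing.injective D K
  obtain ⟨a, ha0, hau⟩ := Ring.exists_not_isUnit_of_not_isField hDf
  refine ⟨a, fun y hy0 hyu => ?_⟩
  obtain ⟨halt, hane⟩ := rav_lt_one (K := K) v hv ha0 hau
  obtain ⟨hylt, hyne⟩ := rav_lt_one (K := K) v hv hy0 hyu
  set α := WithZero.unzero hane with hαdef
  set β := WithZero.unzero hyne with hβdef
  have hα : (α : WithZero (Multiplicative ℚ)) = v (algebraMap D K a) := WithZero.coe_unzero hane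
  have hβ : (β : WithZero (Multiplicative ℚ)) = v (algebraMap D K y) := WithZero.coe_unzero hyne
  set qa := Multiplicative.toAdd α with hqadef
  set qy := Multiplicative.toAdd β with hqydef
  have hαneg : qa < 0 := by
    have h1 : α < 1 := by
      rw [← WithZero.coe_lt_coe, hα, WithZero.coe_one]; exact halt
    simpa using Multiplicative.toAdd_lt.mpr h1
  have hβneg : qy < 0 := by
    have h1 : β < 1 := by
      rw [← WithZero.coe_lt_coe, hβ, WithZero.coe_one]; exact hylt
    simpa using Multiplicative.toAdd_lt.mpr h1
  set r : ℚ := qa / qy with hrdef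
  have hr0 : 0 < r := div_pos_of_neg_of_neg hαneg hβneg
  have hrnum : 0 < r.num := Rat.num_pos.mpr hr0
  set m := r.num.toNat with hmdef
  set n := r.den with hndef
  have hm : 0 < m := by omega
  have hn : 0 < n := r.pos
  have hmq : ((m : ℕ) : ℚ) = (r.num : ℚ) := by
    have h2 : ((r.num.toNat : ℤ)) = r.num := Int.toNat_of_nonneg hrnum.le
    exact_mod_cast h2
  have hrq : r * qy = qa := div_mul_cancel₀ qa (ne_of_lt hβneg)
  have hnd := Rat.num_div_den r
  rw [← hnd] at hrq
  have hd : ((r.den : ℕ) : ℚ) ≠ 0 := by positivity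
  have key : (m : ℚ) * qy = (n : ℚ) * qa := by
    rw [hmq, hndef]
    field_simp at hrq
    linear_combination hrq
  -- equal valuation of the two powers
  have hvy : v (algebraMap D K y) ^ m = v (algebraMap D K a) ^ n := by
    rw [← hβ, ← hα, ← WithZero.coe_pow, ← WithZero.coe_pow]
    congr 1
  have hιa : algebraMap D K (a ^ n) ≠ 0 := fun h =>
    (pow_ne_zero n ha0) (hinj (by rw [h, map_zero]))
  have hιy : algebraMap D K (y ^ m) ≠ 0 := fun h =>
    (pow_ne_zero m hy0) (hinj (by rw [h, map_zero]))
  set ξ : K := algebraMap D K (y ^ m) / algebraMap D K (a ^ n) with hξdef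
  have hξ0 : ξ ≠ 0 := div_ne_zero hιy hιa
  have hvξ : v ξ = 1 := by
    rw [hξdef, map_div₀, map_pow, map_pow, map_pow, map_pow, hvy]
    exact div_self (by
      rw [← map_pow, ← map_pow]
      exact v.ne_zero_iff.mpr hιa)
  have hvξi : v ξ⁻¹ = 1 := by rw [map_inv₀, hvξ, inv_one]
  have hmemξ : ξ ∈ integralClosure D K := (hv _).mp (le_of_eq hvξ)
  have hmemξi : ξ⁻¹ ∈ integralClosure D K := (hv _).mp (le_of_eq hvξi)
  obtain ⟨k₁, hk₁, d₁, hd₁⟩ := rav_root hAV hmemξ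
  obtain ⟨k₂, hk₂, d₂, hd₂⟩ := rav_root hAV hmemξi
  have hp1 : ξ ^ (k₁ * k₂) = algebraMap D K (d₁ ^ k₂) := by
    rw [pow_mul, hd₁, ← map_pow]
  have hp2 : ξ⁻¹ ^ (k₁ * k₂) = algebraMap D K (d₂ ^ k₁) := by
    rw [mul_comm k₁ k₂, pow_mul, hd₂, ← map_pow]
  have hunit : d₁ ^ k₂ * d₂ ^ k₁ = 1 := by
    apply hinj
    rw [map_mul, map_one, ← hp1, ← hp2, ← mul_pow, mul_inv_cancel₀ hξ0, one_pow]
  have hgu : IsUnit (d₁ ^ k₂) := IsUnit.of_mul_eq_one _ hunit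
  obtain ⟨u, hu⟩ := hgu
  refine ⟨m * (k₁ * k₂), n * (k₁ * k₂), Nat.mul_pos hm (Nat.mul_pos hk₁ hk₂),
    Nat.mul_pos hn (Nat.mul_pos hk₁ hk₂), u, ?_⟩
  apply hinj
  rw [hu, pow_mul, map_pow, map_mul, pow_mul a, map_pow (algebraMap D K) (a ^ n) (k₁ * k₂),
    ← hp1, hξdef, div_pow, div_mul_cancel₀]
  exact pow_ne_zero _ hιa

end RAVaux

/-- a domain `D` which is not a field is a RAV-domain (i.e. has an almost
uniformizing parameter) iff `D` is an AV-domain and its integral closure `D̄` in its quotient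
field `K` is a rational valuation domain, i.e. there is a valuation on `K` with values in
`ℚ` (written multiplicatively, with a zero adjoined) whose valuation ring is exactly `D̄`. -/
theorem stmt_17 (D K : Type*) [CommRing D] [IsDomain D] [Field K] [Algebra D K]
    [IsFractionRing D K] (hDf : ¬IsField D) :
    (∃ a : D, ∀ y : D, y ≠ 0 → ¬IsUnit y →
        ∃ m n : ℕ, 0 < m ∧ 0 < n ∧ ∃ u : Dˣ, y ^ m = (u : D) * a ^ n) ↔
      (IsAVDomain D ∧
        ∃ v : Valuation K (WithZero (Multiplicative ℚ)),
          ∀ x : K, v x ≤ 1 ↔ x ∈ integralClosure D K) := by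
  constructor
  · rintro ⟨a, ha⟩
    refine ⟨?_, rav_forward hDf a ha⟩
    intro b c hb hc
    by_cases hbu : IsUnit b
    · exact ⟨1, one_pos, Or.inl (by simpa using hbu.dvd)⟩
    by_cases hcu : IsUnit c
    · exact ⟨1, one_pos, Or.inr (by simpa using hcu.dvd)⟩
    obtain ⟨m, n, hm, hn, u, hu⟩ := ha b hb hbu
    obtain ⟨m', n', hm', hn', u', hu'⟩ := ha c hc hcu
    refine ⟨m * m', Nat.mul_pos hm hm', ?_⟩
    have hb' : b ^ (m * m') = ((u ^ m' : Dˣ) : D) * a ^ (n * m') := by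
      rw [pow_mul, hu, mul_pow, ← pow_mul, Units.val_pow_eq_pow_val]
    have hc' : c ^ (m * m') = ((u' ^ m : Dˣ) : D) * a ^ (n' * m) := by
      rw [mul_comm m m', pow_mul, hu', mul_pow, ← pow_mul, Units.val_pow_eq_pow_val]
    rcases le_total (n * m') (n' * m) with h | h
    · refine Or.inl ⟨(((u ^ m')⁻¹ : Dˣ) : D) * ((u' ^ m : Dˣ) : D) * a ^ (n' * m - n * m'), ?_⟩
      rw [hc', hb']
      have huu : ((u ^ m' : Dˣ) : D) * (((u ^ m')⁻¹ : Dˣ) : D) = 1 := by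
        rw [← Units.val_mul, mul_inv_cancel, Units.val_one]
      have hpow : a ^ (n * m') * a ^ (n' * m - n * m') = a ^ (n' * m) :=
        pow_mul_pow_sub a h
      linear_combination (-(((u' ^ m : Dˣ) : D)) * (a ^ (n * m') * a ^ (n' * m - n * m'))) * huu
        + (-(((u' ^ m : Dˣ) : D))) * hpow
    · refine Or.inr ⟨(((u' ^ m)⁻¹ : Dˣ) : D) * ((u ^ m' : Dˣ) : D) * a ^ (n * m' - n' * m), ?_⟩
      rw [hc', hb']
      have huu : ((u' ^ m : Dˣ) : D) * (((u' ^ m)⁻¹ : Dˣ) : D) = 1 := by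
        rw [← Units.val_mul, mul_inv_cancel, Units.val_one]
      have hpow : a ^ (n' * m) * a ^ (n * m' - n' * m) = a ^ (n * m') :=
        pow_mul_pow_sub a h
      linear_combination (-(((u ^ m' : Dˣ) : D)) * (a ^ (n' * m) * a ^ (n * m' - n' * m))) * huu
        + (-(((u ^ m' : Dˣ) : D))) * hpow
  · rintro ⟨hAV, v, hv⟩
    exact rav_backward hDf hAV v hv
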